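/- arXiv:2102.06751 — 2 statements merged into one kernel-verified Lean document; each statement's English description precedes it below -/
import Mathlib

section
/- Let β ≥ 0 and ν ≥ 0. For every complex λ with Re(λ) > −1, the integration-by-parts identity λ·G_{β,ν+1}(λ) = (ν+1)·G_{β,ν}(λ) − G_{β,ν+β+1}(λ) holds. -/
open MeasureTheory Set Filter Real

lemma key_ineq {β : ℝ} (hβ : 0 ≤ β) {z : ℝ} (hz : 0 ≤ z) :
    z - 1 ≤ z ^ (β + 1) / (β + 1) := by
  have h := one_add_mul_self_le_rpow_one_add (by linarith : (-1:ℝ) ≤ z - 1)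
      (by linarith : (1:ℝ) ≤ β + 1)
  have h2 : (1 : ℝ) + (β+1) * (z-1) ≤ z ^ (β+1) := by simpa using h
  have hb1 : (0:ℝ) < β + 1 := by linarith
  rw [le_div_iff₀ hb1]
  nlinarith

lemma Gint (β μ : ℝ) (hβ : 0 ≤ β) (hμ : 0 ≤ μ) (l : ℂ) (hl : -1 < l.re) :
    IntegrableOn (fun z : ℝ =>
      ((z ^ μ * Real.exp (-z ^ (β + 1) / (β + 1)) : ℝ) : ℂ) * Complex.exp (-l * (z : ℂ)))
      (Set.Ioi 0) := by
  have hb1 : (0:ℝ) < 1 + l.re := by linarith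
  have hg : IntegrableOn (fun z : ℝ => Real.exp 1 * (z ^ μ * Real.exp (-(1 + l.re) * z ^ (1:ℝ))))
      (Set.Ioi 0) :=
    (integrableOn_rpow_mul_exp_neg_mul_rpow (by linarith : (-1:ℝ) < μ) one_pos hb1).const_mul _
  refine Integrable.mono' hg ?_ ?_
  · -- measurability
    apply ContinuousOn.aestronglyMeasurable ?_ measurableSet_Ioi
    apply ContinuousOn.mul ?_ (Continuous.continuousOn (by continuity))
    apply Continuous.comp_continuousOn Complex.continuous_ofReal
    apply ContinuousOn.mul
    · exact fun x hx => (Real.continuousAt_rpow_const x μ (Or.inl (ne_of_gt hx))).continuousWithinAt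
    · have hc : ContinuousOn (fun x : ℝ => x ^ (β+1)) (Set.Ioi 0) := fun x hx =>
        (Real.continuousAt_rpow_const x _ (Or.inl (ne_of_gt hx))).continuousWithinAt
      exact Real.continuous_exp.comp_continuousOn (hc.neg.div_const _)
  · filter_upwards [ae_restrict_mem measurableSet_Ioi] with z hz
    have hz0 : (0:ℝ) < z := hz
    rw [norm_mul, Complex.norm_real, Real.norm_eq_abs, Complex.norm_exp]
    have h1 : |z ^ μ * Real.exp (-z ^ (β + 1) / (β + 1))| =
        z ^ μ * Real.exp (-z ^ (β + 1) / (β + 1)) := by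
      rw [abs_of_nonneg]; positivity
    rw [h1]
    have h2 : (-l * (z:ℂ)).re = -l.re * z := by simp [Complex.mul_re]
    rw [h2]
    have h3 : -z ^ (β+1) / (β+1) ≤ 1 - z := by
      rw [neg_div]; have := key_ineq hβ hz0.le; linarith
    have h4 : Real.exp (-z ^ (β+1)/(β+1)) ≤ Real.exp (1 - z) := Real.exp_le_exp.2 h3
    have h5 : z ^ μ * Real.exp (-z^(β+1)/(β+1)) * Real.exp (-l.re * z)
        ≤ z ^ μ * Real.exp (1 - z) * Real.exp (-l.re * z) := by
      have h0 : (0:ℝ) ≤ z ^ μ := by positivity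
      exact mul_le_mul_of_nonneg_right (mul_le_mul_of_nonneg_left h4 h0) (Real.exp_pos _).le
    calc z ^ μ * Real.exp (-z^(β+1)/(β+1)) * Real.exp (-l.re * z)
        ≤ z ^ μ * Real.exp (1 - z) * Real.exp (-l.re * z) := h5
      _ = Real.exp 1 * (z ^ μ * Real.exp (-(1 + l.re) * z ^ (1:ℝ))) := by
          rw [Real.rpow_one, mul_assoc, ← Real.exp_add,
            show (1:ℝ) - z + -l.re*z = 1 + -(1+l.re)*z by ring, Real.exp_add]; ring


/-- The characteristic function `G_{β,μ}(λ) = ∫₀^∞ z^μ exp(−z^{β+1}/(β+1)) e^{−λz} dz`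
of the linearized Becker–Döring bubblelator limit model. -/
noncomputable def G (β μ : ℝ) (l : ℂ) : ℂ :=
  ∫ z in Set.Ioi (0 : ℝ),
    ((z ^ μ * Real.exp (-z ^ (β + 1) / (β + 1)) : ℝ) : ℂ) * Complex.exp (-l * (z : ℂ))

/-- Integration by parts identity:
`λ·G_{β,ν+1}(λ) = (ν+1)·G_{β,ν}(λ) − G_{β,ν+β+1}(λ)` for `Re λ > −1`. -/
theorem stmt7 (β ν : ℝ) (hβ : 0 ≤ β) (hν : 0 ≤ ν) (l : ℂ) (hl : -1 < l.re) :
    l * G β (ν + 1) l = ((ν : ℂ) + 1) * G β ν l - G β (ν + β + 1) l := by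
  set g : ℝ → ℝ → ℂ := fun μ z =>
    ((z ^ μ * Real.exp (-z ^ (β + 1) / (β + 1)) : ℝ) : ℂ) * Complex.exp (-l * (z : ℂ)) with hg
  set f : ℝ → ℂ := fun z => g (ν + 1) z with hf
  set F : ℝ → ℂ := fun z => ((ν : ℂ) + 1) * g ν z - g (ν + β + 1) z - l * g (ν + 1) z with hF
  have hb1 : (0 : ℝ) < β + 1 := by linarith
  -- derivative
  have hderiv : ∀ z ∈ Set.Ioi (0:ℝ), HasDerivAt f (F z) z := by
    intro z hz
    have hz0 : (0:ℝ) < z := hz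
    have h1 : HasDerivAt (fun y : ℝ => y ^ (ν + 1)) ((ν + 1) * z ^ ν) z := by
      have := Real.hasDerivAt_rpow_const (x := z) (p := ν + 1) (Or.inl hz0.ne')
      simpa using this
    have hin : HasDerivAt (fun y : ℝ => -y ^ (β + 1) / (β + 1)) (-z ^ β) z := by
      have := (Real.hasDerivAt_rpow_const (x := z) (p := β + 1) (Or.inl hz0.ne')).neg.div_const
        (β + 1)
      refine this.congr_deriv ?_
      rw [add_sub_cancel_right]
      field_simp
    have h2 : HasDerivAt (fun y : ℝ => Real.exp (-y ^ (β + 1) / (β + 1)))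
        (Real.exp (-z ^ (β + 1) / (β + 1)) * (-z ^ β)) z := hin.exp
    have h3 : HasDerivAt (fun y : ℝ => Complex.exp (-l * (y : ℂ)))
        (Complex.exp (-l * (z:ℂ)) * (-l * 1)) z :=
      (((hasDerivAt_id z).ofReal_comp).const_mul (-l)).cexp
    have h12 : HasDerivAt (fun y : ℝ =>
        ((y ^ (ν+1) * Real.exp (-y ^ (β + 1) / (β + 1)) : ℝ) : ℂ))
        (((ν + 1) * z ^ ν * Real.exp (-z ^ (β + 1) / (β + 1))
          + z ^ (ν+1) * (Real.exp (-z ^ (β + 1) / (β + 1)) * (-z ^ β)) : ℝ) : ℂ) z :=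
      (h1.mul h2).ofReal_comp
    have := h12.mul h3
    refine this.congr_deriv ?_
    have hsplit : z ^ (ν + β + 1) = z ^ ν * z ^ β * z := by
      rw [← Real.rpow_add hz0, ← Real.rpow_add_one hz0.ne']
    have hsplit2 : z ^ (ν + 1) = z ^ ν * z := Real.rpow_add_one hz0.ne' ν
    simp only [hF, hg]
    push_cast [hsplit, hsplit2]
    ring
  -- integrability of F
  have hint : ∀ μ : ℝ, 0 ≤ μ → IntegrableOn (g μ) (Set.Ioi 0) := fun μ hμ =>
    Gint β μ hβ hμ l hl
  have hFint : IntegrableOn F (Set.Ioi 0) :=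
    (((hint ν hν).const_mul _).sub (hint (ν + β + 1) (by linarith))).sub
      ((hint (ν + 1) (by linarith)).const_mul _)
  -- limit at infinity
  have htend : Tendsto f atTop (nhds 0) := by
    apply squeeze_zero_norm'
      (a := fun z : ℝ => Real.exp 1 * (z ^ (ν+1) * Real.exp (-(1 + l.re) * z)))
    · filter_upwards [eventually_gt_atTop (0:ℝ)] with z hz0
      simp only [hf, hg]
      rw [norm_mul, Complex.norm_real, Real.norm_eq_abs, Complex.norm_exp]
      rw [abs_of_nonneg (by positivity)]
      have h2 : (-l * (z:ℂ)).re = -l.re * z := by simp [Complex.mul_re]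
      rw [h2]
      have h3 : -z ^ (β+1) / (β+1) ≤ 1 - z := by
        rw [neg_div]; have := key_ineq hβ hz0.le; linarith
      calc z ^ (ν+1) * Real.exp (-z^(β+1)/(β+1)) * Real.exp (-l.re * z)
          ≤ z ^ (ν+1) * Real.exp (1 - z) * Real.exp (-l.re * z) :=
            mul_le_mul_of_nonneg_right
              (mul_le_mul_of_nonneg_left (Real.exp_le_exp.2 h3) (by positivity))
              (Real.exp_pos _).le
        _ = Real.exp 1 * (z ^ (ν+1) * Real.exp (-(1 + l.re) * z)) := by
            rw [mul_assoc, ← Real.exp_add,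
              show (1:ℝ) - z + -l.re*z = 1 + -(1+l.re)*z by ring, Real.exp_add]; ring
    · have := (tendsto_rpow_mul_exp_neg_mul_atTop_nhds_zero (ν+1) (1 + l.re)
        (by linarith)).const_mul (Real.exp 1)
      simpa using this
  -- continuity at 0 and value
  have hcont : ContinuousWithinAt f (Set.Ici 0) 0 := by
    apply ContinuousAt.continuousWithinAt
    apply ContinuousAt.mul
    · apply Complex.continuous_ofReal.continuousAt.comp
      apply ContinuousAt.mul
      · exact Real.continuousAt_rpow_const 0 (ν+1) (Or.inr (by linarith))
      · exact (Real.continuous_exp.continuousAt).comp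
          (((Real.continuousAt_rpow_const 0 (β+1) (Or.inr (by linarith))).neg).div_const _)
    · exact (Complex.continuous_exp.comp (continuous_const.mul Complex.continuous_ofReal)
        ).continuousAt
  have hf0 : f 0 = 0 := by
    simp only [hf, hg]
    rw [Real.zero_rpow (by positivity : ν + 1 ≠ 0)]
    push_cast
    ring
  have key : ∫ z in Set.Ioi (0:ℝ), F z = 0 - f 0 :=
    integral_Ioi_of_hasDerivAt_of_tendsto hcont hderiv hFint htend
  rw [hf0, sub_zero] at key
  have hsplit : ∫ z in Set.Ioi (0:ℝ), F z
      = ((ν:ℂ)+1) * G β ν l - G β (ν+β+1) l - l * G β (ν+1) l := by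
    simp only [hF]
    have hA : IntegrableOn (fun z => ((ν:ℂ)+1) * g ν z) (Set.Ioi 0) := (hint ν hν).const_mul _
    have hB := hint (ν + β + 1) (by linarith : (0:ℝ) ≤ ν + β + 1)
    have hC : IntegrableOn (fun z => l * g (ν+1) z) (Set.Ioi 0) :=
      (hint (ν + 1) (by linarith)).const_mul _
    have hAB : IntegrableOn (fun z => ((ν:ℂ)+1) * g ν z - g (ν+β+1) z) (Set.Ioi 0) := hA.sub hB
    rw [integral_sub hAB hC, integral_sub hA hB, integral_const_mul, integral_const_mul]
    simp only [hg, G]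
  rw [hsplit] at key
  linear_combination -key
end

section
/- Let β > 1. Then there exists t > 0 such that Re G_{β,0}(it) = ∫₀^∞ exp(−y^{β+1}/(β+1))·cos(t y) dy = 0. (Indeed, since for exponent β+1 > 2 the function y ↦ exp(−|y|^{β+1}/(β+1)) is not positive definite, its cosine transform must take a negative value; since it is continuous and positive at t = 0, it has a zero.) -/
open MeasureTheory Real Set Filter

namespace Stmt13Aux

noncomputable def f (p y : ℝ) : ℝ := Real.exp (-y ^ p / p)

variable {p : ℝ}

lemma f_cont (hp : 0 < p) : Continuous (f p) := by
  have h : Continuous fun y : ℝ => y ^ p :=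
    continuous_id.rpow_const (fun x => Or.inr hp.le)
  exact Real.continuous_exp.comp ((h.neg).div_const p)

lemma f_le_one (hp : 0 < p) {y : ℝ} (hy : 0 ≤ y) : f p y ≤ 1 := by
  have h1 : 0 ≤ y ^ p := Real.rpow_nonneg hy p
  have : -y ^ p / p ≤ 0 := div_nonpos_of_nonpos_of_nonneg (by linarith) hp.le
  exact Real.exp_le_one_iff.mpr this

lemma f_zero (hp : 0 < p) : f p 0 = 1 := by
  rw [f, Real.zero_rpow hp.ne', neg_zero, zero_div, Real.exp_zero]

lemma f_int (hp : 1 ≤ p) : IntegrableOn (f p) (Ioi 0) := by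
  have hp0 : 0 < p := lt_of_lt_of_le one_pos hp
  have h := integrableOn_rpow_mul_exp_neg_mul_rpow (s := 0) (p := p) (b := 1/p)
    (by norm_num) hp0 (by positivity)
  refine h.congr_fun (fun x hx => ?_) measurableSet_Ioi
  beta_reduce
  rw [Real.rpow_zero, one_mul, f]
  congr 1
  ring

noncomputable def K (p c ε : ℝ) : ℝ :=
  ∫ y in Ioi (0:ℝ), f p y * Real.exp (-(y - c)^2 / (4 * ε^2))

noncomputable def M (p c ε : ℝ) : ℝ := (1/(2*ε)) * K p c ε

noncomputable def Hf (p c ε u : ℝ) : ℝ :=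
  (Ioi (0:ℝ)).indicator (fun y => f p y * Real.exp (-(y - c)^2 / (4 * ε^2))) (c + 2*ε*u)

lemma Hf_eq {c ε : ℝ} (hε : 0 < ε) (u : ℝ) :
    Hf p c ε u = if 0 < c + 2*ε*u then f p (c + 2*ε*u) * Real.exp (-u^2) else 0 := by
  rw [Hf, indicator_apply]
  by_cases h : (0:ℝ) < c + 2*ε*u
  · rw [if_pos (mem_Ioi.mpr h), if_pos h]
    congr 1
    congr 1
    have hε2 : (4:ℝ) * ε^2 ≠ 0 := by positivity
    field_simp
    ring
  · rw [if_neg (fun hh => h (mem_Ioi.mp hh)), if_neg h]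

lemma Hf_meas (hp : 0 < p) (c : ℝ) {ε : ℝ} (hε : 0 < ε) :
    AEStronglyMeasurable (Hf p c ε) (volume : Measure ℝ) := by
  have h1 : Measurable ((Ioi (0:ℝ)).indicator
      (fun y => f p y * Real.exp (-(y - c)^2 / (4 * ε^2)))) := by
    refine Measurable.indicator ?_ measurableSet_Ioi
    exact ((f_cont hp).mul (Real.continuous_exp.comp
      ((((continuous_id.sub continuous_const).pow 2).neg).div_const _))).measurable
  have h2 : Measurable fun u : ℝ => c + 2*ε*u := by fun_prop
  exact (h1.comp h2).aestronglyMeasurable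

lemma Hf_bound (hp : 0 < p) (c : ℝ) {ε : ℝ} (hε : 0 < ε) (u : ℝ) :
    ‖Hf p c ε u‖ ≤ Real.exp (-u^2) := by
  rw [Hf_eq hε, Real.norm_eq_abs]
  split_ifs with h
  · rw [abs_mul, abs_of_pos (Real.exp_pos _),
      abs_of_pos (show (0:ℝ) < f p (c + 2*ε*u) from Real.exp_pos _)]
    have := f_le_one hp (le_of_lt h)
    calc f p (c + 2*ε*u) * Real.exp (-u^2) ≤ 1 * Real.exp (-u^2) :=
          mul_le_mul_of_nonneg_right this (Real.exp_pos _).le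
      _ = Real.exp (-u^2) := one_mul _
  · simp [Real.exp_pos, (Real.exp_pos (-u^2)).le]

lemma bound_int : Integrable (fun u : ℝ => Real.exp (-u^2)) := by
  have := integrable_exp_neg_mul_sq (b := (1:ℝ)) one_pos
  simpa using this

lemma M_eq_integral_Hf (c : ℝ) {ε : ℝ} (hε : 0 < ε) :
    M p c ε = ∫ u : ℝ, Hf p c ε u := by
  have h2ε : (2*ε) ≠ 0 := by positivity
  set ψ : ℝ → ℝ := (Ioi (0:ℝ)).indicator (fun y => f p y * Real.exp (-(y - c)^2 / (4 * ε^2)))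
    with hψ
  have hK : K p c ε = ∫ y : ℝ, ψ y := by
    rw [K, hψ, integral_indicator measurableSet_Ioi]
  have h1 : (fun u : ℝ => ψ (c + 2*ε*u)) = fun u : ℝ => (fun x => ψ (c + x)) ((2*ε) * u) := by
    funext u; rw [mul_assoc]
  have h2 : ∫ u : ℝ, ψ (c + 2*ε*u) = |(2*ε)⁻¹| • ∫ x : ℝ, ψ (c + x) := by
    rw [h1, MeasureTheory.Measure.integral_comp_mul_left (fun x => ψ (c + x)) (2*ε)]
  have h3 : ∫ x : ℝ, ψ (c + x) = ∫ x : ℝ, ψ x := integral_add_left_eq_self ψ c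
  have hHf : ∀ u, Hf p c ε u = ψ (c + 2*ε*u) := fun u => rfl
  rw [M, hK]
  simp_rw [hHf]
  rw [h2, h3, smul_eq_mul, abs_of_pos (by positivity : (0:ℝ) < (2*ε)⁻¹)]
  rw [one_div]


lemma exp_negsq_eq : (fun u : ℝ => Real.exp (-u^2)) = fun u : ℝ => Real.exp (-1 * u^2) := by
  funext u; norm_num

lemma tendsto_affine (c u : ℝ) :
    Tendsto (fun ε : ℝ => c + 2*ε*u) (nhdsWithin 0 (Ioi 0)) (nhds c) := by
  have h : Continuous fun ε : ℝ => c + 2*ε*u := by fun_prop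
  have h2 : Tendsto (fun ε : ℝ => c + 2*ε*u) (nhds 0) (nhds c) := by
    simpa using h.tendsto 0
  exact h2.mono_left nhdsWithin_le_nhds

lemma tendsto_M_pos (hp : 1 ≤ p) {c : ℝ} (hc : 0 < c) :
    Tendsto (M p c) (nhdsWithin 0 (Ioi 0)) (nhds (Real.sqrt π * f p c)) := by
  have hp0 : 0 < p := lt_of_lt_of_le one_pos hp
  have hmain : Tendsto (fun ε => ∫ u : ℝ, Hf p c ε u) (nhdsWithin 0 (Ioi 0))
      (nhds (∫ u : ℝ, f p c * Real.exp (-u^2))) := by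
    refine tendsto_integral_filter_of_dominated_convergence (fun u => Real.exp (-u^2))
      ?_ ?_ bound_int ?_
    · filter_upwards [self_mem_nhdsWithin] with ε hε
      exact Hf_meas hp0 c (mem_Ioi.mp hε)
    · filter_upwards [self_mem_nhdsWithin] with ε hε
      exact Eventually.of_forall (Hf_bound hp0 c (mem_Ioi.mp hε))
    · refine Eventually.of_forall fun u => ?_
      have hev : ∀ᶠ ε in nhdsWithin (0:ℝ) (Ioi 0),
          Hf p c ε u = f p (c + 2*ε*u) * Real.exp (-u^2) := by
        have h1 : ∀ᶠ ε in nhdsWithin (0:ℝ) (Ioi 0), 0 < c + 2*ε*u :=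
          (tendsto_affine c u).eventually (eventually_gt_nhds hc)
        filter_upwards [h1, self_mem_nhdsWithin] with ε h hε
        rw [Hf_eq (mem_Ioi.mp hε), if_pos h]
      have h2 : Tendsto (fun ε : ℝ => f p (c + 2*ε*u) * Real.exp (-u^2))
          (nhdsWithin 0 (Ioi 0)) (nhds (f p c * Real.exp (-u^2))) :=
        (((f_cont hp0).tendsto c).comp (tendsto_affine c u)).mul_const _
      exact Filter.Tendsto.congr' (Filter.EventuallyEq.symm hev) h2
  have hval : ∫ u : ℝ, f p c * Real.exp (-u^2) = Real.sqrt π * f p c := by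
    rw [integral_const_mul, exp_negsq_eq, integral_gaussian]
    norm_num [mul_comm]
  rw [hval] at hmain
  refine hmain.congr' ?_
  filter_upwards [self_mem_nhdsWithin] with ε hε
  exact (M_eq_integral_Hf c (mem_Ioi.mp hε)).symm

lemma tendsto_M_zero (hp : 1 ≤ p) :
    Tendsto (M p 0) (nhdsWithin 0 (Ioi 0)) (nhds (Real.sqrt π / 2)) := by
  have hp0 : 0 < p := lt_of_lt_of_le one_pos hp
  have hmain : Tendsto (fun ε => ∫ u : ℝ, Hf p 0 ε u) (nhdsWithin 0 (Ioi 0))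
      (nhds (∫ u : ℝ, (Ioi (0:ℝ)).indicator (fun u => Real.exp (-u^2)) u)) := by
    refine tendsto_integral_filter_of_dominated_convergence (fun u => Real.exp (-u^2))
      ?_ ?_ bound_int ?_
    · filter_upwards [self_mem_nhdsWithin] with ε hε
      exact Hf_meas hp0 0 (mem_Ioi.mp hε)
    · filter_upwards [self_mem_nhdsWithin] with ε hε
      exact Eventually.of_forall (Hf_bound hp0 0 (mem_Ioi.mp hε))
    · have hne : ∀ᵐ u : ℝ, u ≠ 0 := by
        have h0 : (volume : Measure ℝ) {(0:ℝ)} = 0 := measure_singleton 0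
        filter_upwards [compl_mem_ae_iff.mpr h0] with u hu
        simpa using hu
      filter_upwards [hne] with u hu
      rcases lt_or_gt_of_ne hu with hneg | hpos
      · have hev : ∀ᶠ ε in nhdsWithin (0:ℝ) (Ioi 0), Hf p 0 ε u = 0 := by
          filter_upwards [self_mem_nhdsWithin] with ε hε
          have hε' : 0 < ε := mem_Ioi.mp hε
          rw [Hf_eq hε', if_neg (by nlinarith)]
        rw [indicator_of_notMem (by simpa using hneg.le)]
        exact Filter.Tendsto.congr' (Filter.EventuallyEq.symm hev) tendsto_const_nhds
      · have hev : ∀ᶠ ε in nhdsWithin (0:ℝ) (Ioi 0),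
            Hf p 0 ε u = f p (0 + 2*ε*u) * Real.exp (-u^2) := by
          filter_upwards [self_mem_nhdsWithin] with ε hε
          have hε' : 0 < ε := mem_Ioi.mp hε
          rw [Hf_eq hε', if_pos (by nlinarith)]
        have h2 : Tendsto (fun ε : ℝ => f p (0 + 2*ε*u) * Real.exp (-u^2))
            (nhdsWithin 0 (Ioi 0)) (nhds (f p 0 * Real.exp (-u^2))) :=
          (((f_cont hp0).tendsto 0).comp (tendsto_affine 0 u)).mul_const _
        rw [f_zero hp0, one_mul] at h2
        rw [indicator_of_mem (mem_Ioi.mpr hpos)]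
        exact Filter.Tendsto.congr' (Filter.EventuallyEq.symm hev) h2
  have hval : ∫ u : ℝ, (Ioi (0:ℝ)).indicator (fun u => Real.exp (-u^2)) u
      = Real.sqrt π / 2 := by
    rw [integral_indicator measurableSet_Ioi]
    have := integral_gaussian_Ioi (1:ℝ)
    simpa using this
  rw [hval] at hmain
  refine hmain.congr' ?_
  filter_upwards [self_mem_nhdsWithin] with ε hε
  exact (M_eq_integral_Hf 0 (mem_Ioi.mp hε)).symm

lemma tendsto_M_neg (hp : 1 ≤ p) {c : ℝ} (hc : c < 0) :
    Tendsto (M p c) (nhdsWithin 0 (Ioi 0)) (nhds 0) := by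
  have hp0 : 0 < p := lt_of_lt_of_le one_pos hp
  have hmain : Tendsto (fun ε => ∫ u : ℝ, Hf p c ε u) (nhdsWithin 0 (Ioi 0))
      (nhds (∫ _ : ℝ, (0:ℝ))) := by
    refine tendsto_integral_filter_of_dominated_convergence (fun u => Real.exp (-u^2))
      ?_ ?_ bound_int ?_
    · filter_upwards [self_mem_nhdsWithin] with ε hε
      exact Hf_meas hp0 c (mem_Ioi.mp hε)
    · filter_upwards [self_mem_nhdsWithin] with ε hε
      exact Eventually.of_forall (Hf_bound hp0 c (mem_Ioi.mp hε))
    · refine Eventually.of_forall fun u => ?_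
      have hev : ∀ᶠ ε in nhdsWithin (0:ℝ) (Ioi 0), Hf p c ε u = 0 := by
        have h1 : ∀ᶠ ε in nhdsWithin (0:ℝ) (Ioi 0), c + 2*ε*u < 0 :=
          (tendsto_affine c u).eventually (eventually_lt_nhds hc)
        filter_upwards [h1, self_mem_nhdsWithin] with ε h hε
        rw [Hf_eq (mem_Ioi.mp hε), if_neg (by linarith)]
      exact Filter.Tendsto.congr' (Filter.EventuallyEq.symm hev) tendsto_const_nhds
  rw [integral_zero] at hmain
  refine hmain.congr' ?_
  filter_upwards [self_mem_nhdsWithin] with ε hε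
  exact (M_eq_integral_Hf c (mem_Ioi.mp hε)).symm


noncomputable def F (p t : ℝ) : ℝ := ∫ y in Ioi (0:ℝ), f p y * Real.cos (t * y)

lemma gauss_cos_real {a b : ℝ} (ha : 0 < a) :
    ∫ x : ℝ, Real.exp (-a * x ^ 2) * Real.cos (b * x) = Real.sqrt (π / a) * Real.exp (-b ^ 2 / (4 * a)) := by
  have ha' : 0 < (a : ℂ).re := by simpa using ha
  have key := fourierIntegral_gaussian ha' (b : ℂ)
  have hint : Integrable fun x : ℝ => Complex.exp (Complex.I * b * x) * Complex.exp (-a * x ^ 2) := by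
    have := integrable_cexp_quadratic (b := (a : ℂ)) ha' (Complex.I * b) 0
    refine this.congr (Filter.Eventually.of_forall fun x => ?_)
    simp only [← Complex.exp_add]
    congr 1
    ring
  have hre := congrArg Complex.re key
  have hre2 := integral_re (𝕜 := ℂ) hint
  simp only [RCLike.re_to_complex] at hre2
  rw [← hre2] at hre
  have hL : ∀ x : ℝ, (Complex.exp (Complex.I * b * x) * Complex.exp (-a * x ^ 2)).re
      = Real.exp (-a * x ^ 2) * Real.cos (b * x) := by
    intro x
    rw [← Complex.exp_add]
    have harg : Complex.I * b * x + (-a * x ^ 2 : ℂ) = Complex.ofReal (-a * x^2) + Complex.ofReal (b * x) * Complex.I := by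
      push_cast; ring
    rw [harg, Complex.exp_re]
    simp only [Complex.add_re, Complex.ofReal_re, Complex.mul_I_re, Complex.ofReal_im,
      Complex.add_im, Complex.mul_I_im, neg_zero, add_zero, zero_add]
  rw [show (∫ x : ℝ, (Complex.exp (Complex.I * b * x) * Complex.exp (-a * x ^ 2)).re)
      = ∫ x : ℝ, Real.exp (-a * x ^ 2) * Real.cos (b * x) from by simp_rw [hL]] at hre
  rw [hre]
  have hpa : (0:ℝ) ≤ π / a := by positivity
  have h1 : (((π / a : ℝ)) : ℂ) ^ (1/2 : ℂ) = ((Real.sqrt (π / a) : ℝ) : ℂ) := by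
    rw [Real.sqrt_eq_rpow]
    rw [Complex.ofReal_cpow hpa]
    norm_num
  have harg2 : (-(b:ℂ) ^ 2 / (4 * (a:ℂ))) = ((-b ^ 2 / (4 * a) : ℝ) : ℂ) := by push_cast; ring
  rw [show ((π:ℂ) / (a:ℂ)) = ((π / a : ℝ) : ℂ) by push_cast; ring, harg2,
    ← Complex.ofReal_exp, h1, ← Complex.ofReal_mul, Complex.ofReal_re]

lemma gauss_cos_Ioi {a b : ℝ} (ha : 0 < a) :
    ∫ t in Ioi (0:ℝ), Real.exp (-a * t ^ 2) * Real.cos (b * t)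
      = Real.sqrt (π / a) / 2 * Real.exp (-b ^ 2 / (4 * a)) := by
  have heven : ∀ x : ℝ, Real.exp (-a * |x| ^ 2) * Real.cos (b * |x|)
      = Real.exp (-a * x ^ 2) * Real.cos (b * x) := by
    intro x
    rcases le_or_gt 0 x with h | h
    · rw [abs_of_nonneg h]
    · rw [abs_of_neg h]
      rw [mul_neg, Real.cos_neg]
      ring_nf
  have := integral_comp_abs (f := fun y => Real.exp (-a * y ^ 2) * Real.cos (b * y))
  rw [show (∫ x : ℝ, Real.exp (-a * |x| ^ 2) * Real.cos (b * |x|))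
      = ∫ x : ℝ, Real.exp (-a * x ^ 2) * Real.cos (b * x) from by simp_rw [heven]] at this
  rw [gauss_cos_real ha] at this
  linarith

lemma fcos_int (hp : 1 ≤ p) (t : ℝ) :
    IntegrableOn (fun y => f p y * Real.cos (t * y)) (Ioi 0) := by
  have hp0 : 0 < p := lt_of_lt_of_le one_pos hp
  refine Integrable.mono' (f_int hp) ?_ ?_
  · exact (((f_cont hp0).mul (Real.continuous_cos.comp
      (continuous_const.mul continuous_id)))).aestronglyMeasurable.restrict
  · refine (ae_restrict_iff' measurableSet_Ioi).mpr (Eventually.of_forall fun y hy => ?_)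
    rw [Real.norm_eq_abs, abs_mul]
    have h1 : |f p y| = f p y := abs_of_pos (Real.exp_pos _)
    have h2 : |Real.cos (t * y)| ≤ 1 := Real.abs_cos_le_one _
    calc |f p y| * |Real.cos (t * y)| ≤ |f p y| * 1 := by
          exact mul_le_mul_of_nonneg_left h2 (abs_nonneg _)
      _ = f p y := by rw [mul_one, h1]

lemma F_cont (hp : 1 ≤ p) : Continuous (F p) := by
  have hp0 : 0 < p := lt_of_lt_of_le one_pos hp
  refine continuous_of_dominated (bound := f p) ?_ ?_ (f_int hp) ?_
  · intro t
    exact (((f_cont hp0).mul (Real.continuous_cos.comp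
      (continuous_const.mul continuous_id)))).aestronglyMeasurable.restrict
  · intro t
    refine (ae_restrict_iff' measurableSet_Ioi).mpr (Eventually.of_forall fun y hy => ?_)
    rw [Real.norm_eq_abs, abs_mul]
    have h1 : |f p y| = f p y := abs_of_pos (Real.exp_pos _)
    calc |f p y| * |Real.cos (t * y)| ≤ |f p y| * 1 :=
          mul_le_mul_of_nonneg_left (Real.abs_cos_le_one _) (abs_nonneg _)
      _ = f p y := by rw [mul_one, h1]
  · refine Eventually.of_forall fun y => ?_
    exact continuous_const.mul (Real.continuous_cos.comp (continuous_mul_right y))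

lemma F_zero_pos (hp : 1 ≤ p) : 0 < F p 0 := by
  have : F p 0 = ∫ y in Ioi (0:ℝ), f p y := by
    unfold F
    refine setIntegral_congr_fun measurableSet_Ioi fun y hy => ?_
    simp
  rw [this]
  refine (setIntegral_pos_iff_support_of_nonneg_ae ?_ (f_int hp)).mpr ?_
  · exact (ae_restrict_iff' measurableSet_Ioi).mpr (Eventually.of_forall fun y hy =>
      (Real.exp_pos _).le)
  · have : Function.support (f p) = univ := by
      ext y; simp [f, Real.exp_ne_zero]
    rw [this, univ_inter, Real.volume_Ioi]
    exact ENNReal.zero_lt_top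

lemma G_re (β : ℝ) (hβ : 0 < β) (t : ℝ) :
    (G β 0 (Complex.I * (t : ℂ))).re = F (β + 1) t := by
  have hp : 1 ≤ β + 1 := by linarith
  have hp0 : 0 < β + 1 := by linarith
  -- the complex integrand
  set φ : ℝ → ℂ := fun z =>
    ((z ^ (0:ℝ) * Real.exp (-z ^ (β + 1) / (β + 1)) : ℝ) : ℂ)
      * Complex.exp (-(Complex.I * (t : ℂ)) * (z : ℂ)) with hφ
  have hint : IntegrableOn φ (Ioi 0) := by
    refine Integrable.mono' ((f_int hp).congr_fun (fun x hx => rfl) measurableSet_Ioi) ?_ ?_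
    · apply Continuous.aestronglyMeasurable ?_ |>.restrict
      have h1 : Continuous fun z : ℝ => ((z ^ (0:ℝ) * Real.exp (-z ^ (β + 1) / (β + 1)) : ℝ) : ℂ) := by
        refine Complex.continuous_ofReal.comp ?_
        exact (continuous_id.rpow_const fun _ => Or.inr le_rfl).mul (f_cont hp0)
      have h2 : Continuous fun z : ℝ => Complex.exp (-(Complex.I * (t : ℂ)) * (z : ℂ)) :=
        Complex.continuous_exp.comp (continuous_const.mul Complex.continuous_ofReal)
      exact h1.mul h2
    · refine (ae_restrict_iff' measurableSet_Ioi).mpr (Eventually.of_forall fun z hz => ?_)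
      rw [hφ]
      simp only [norm_mul, Complex.norm_real]
      have h3 : ‖Complex.exp (-(Complex.I * (t : ℂ)) * (z : ℂ))‖ = 1 := by
        rw [Complex.norm_exp]
        have : (-(Complex.I * (t : ℂ)) * (z : ℂ)).re = 0 := by simp
        rw [this, Real.exp_zero]
      rw [h3, mul_one]
      simp only [Real.norm_eq_abs, Real.rpow_zero, abs_one, one_mul, abs_mul]
      rw [abs_of_pos (Real.exp_pos _)]
      exact le_of_eq rfl
  have hGre : (G β 0 (Complex.I * (t : ℂ))).re = ∫ z in Ioi (0:ℝ), (φ z).re := by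
    have h := integral_re (𝕜 := ℂ) hint
    simp only [RCLike.re_to_complex] at h
    rw [G, ← h]
  rw [hGre]
  unfold F
  refine setIntegral_congr_fun measurableSet_Ioi fun z hz => ?_
  rw [hφ]
  simp only [Real.rpow_zero, one_mul]
  rw [Complex.re_ofReal_mul]
  have hre : (Complex.exp (-(Complex.I * (t:ℂ)) * (z:ℂ))).re = Real.cos (t*z) := by
    rw [Complex.exp_re]
    have h1 : (-(Complex.I * (t:ℂ)) * (z:ℂ)).re = 0 := by simp
    have h2 : (-(Complex.I * (t:ℂ)) * (z:ℂ)).im = -(t*z) := by simp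
    rw [h1, h2, Real.exp_zero, one_mul, Real.cos_neg]
  rw [hre]
  rfl


lemma exists_s (hp : 2 < p) : ∃ s : ℝ, 0 < s ∧ 3 - 4 * f p s + f p (2*s) < 0 := by
  have hp0 : 0 < p := by linarith
  set q : ℝ := (2:ℝ) ^ p with hq_def
  have hq4 : 4 < q := by
    have h22 : (2:ℝ) ^ (2:ℝ) = 4 := by
      rw [show (2:ℝ) = ((2:ℕ):ℝ) by norm_num, Real.rpow_natCast]
      norm_num
    rw [hq_def, ← h22]
    exact Real.rpow_lt_rpow_of_exponent_lt one_lt_two hp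
  set u : ℝ := (q - 4)/(8*q) with hu_def
  have hq0 : 0 < q := by linarith
  have hu0 : 0 < u := by
    apply div_pos (by linarith) (by linarith)
  have hqu : q * u = (q-4)/8 := by
    rw [hu_def]; field_simp
  have hpu : 0 < p * u := mul_pos hp0 hu0
  refine ⟨(p*u) ^ (1/p : ℝ), Real.rpow_pos_of_pos hpu _, ?_⟩
  set s : ℝ := (p*u) ^ (1/p : ℝ) with hs_def
  have hs0 : 0 < s := Real.rpow_pos_of_pos hpu _
  have hsp : s ^ p = p * u := by
    rw [hs_def, ← Real.rpow_mul hpu.le, one_div, inv_mul_cancel₀ hp0.ne', Real.rpow_one]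
  have h2sp : (2*s) ^ p = q * (p * u) := by
    rw [Real.mul_rpow (by norm_num) hs0.le, hsp, hq_def]
  have hfs : f p s = Real.exp (-u) := by
    rw [f, hsp]
    congr 1
    field_simp
  have hf2s : f p (2*s) = Real.exp (-(q*u)) := by
    rw [f, h2sp]
    congr 1
    field_simp
  rw [hfs, hf2s]
  have h1 : 1 - u < Real.exp (-u) := by
    have := Real.add_one_lt_exp (x := -u) (by linarith)
    linarith
  have hqu0 : 0 < q * u := mul_pos hq0 hu0
  have h2 : (q*u + 1) * Real.exp (-(q*u)) < 1 := by
    have hE := Real.add_one_lt_exp (x := q*u) (by linarith)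
    rw [Real.exp_neg, mul_inv_lt_iff₀ (Real.exp_pos _), one_mul]
    linarith
  have hE2pos := Real.exp_pos (-(q*u))
  nlinarith [sq_nonneg (q-4), sq_nonneg (q+4), mul_pos hq0 hu0, h2, h1,
    mul_pos (mul_pos hq0 hq0) hu0]


noncomputable def w (s ε t : ℝ) : ℝ :=
  Real.exp (-ε^2 * t^2) * (3 - 4*Real.cos (s*t) + Real.cos (2*s*t))

lemma w_nonneg (s ε t : ℝ) : 0 ≤ w s ε t := by
  rw [w]
  have h := Real.cos_two_mul (s*t)
  have h2 : Real.cos (2*s*t) = 2 * Real.cos (s*t)^2 - 1 := by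
    rw [show 2*s*t = 2*(s*t) by ring, h]
  rw [h2]
  have := Real.exp_pos (-ε^2 * t^2)
  nlinarith [sq_nonneg (1 - Real.cos (s*t))]

lemma w_abs_le (s ε t : ℝ) : |w s ε t| ≤ 8 * Real.exp (-ε^2 * t^2) := by
  rw [w, abs_mul, abs_of_pos (Real.exp_pos _)]
  have h1 := Real.neg_one_le_cos (s*t)
  have h2 := Real.cos_le_one (s*t)
  have h3 := Real.neg_one_le_cos (2*s*t)
  have h4 := Real.cos_le_one (2*s*t)
  have h5 : |3 - 4*Real.cos (s*t) + Real.cos (2*s*t)| ≤ 8 := by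
    rw [abs_le]; constructor <;> nlinarith
  calc Real.exp (-ε^2 * t^2) * |3 - 4*Real.cos (s*t) + Real.cos (2*s*t)|
      ≤ Real.exp (-ε^2 * t^2) * 8 := mul_le_mul_of_nonneg_left h5 (Real.exp_pos _).le
    _ = 8 * Real.exp (-ε^2 * t^2) := by ring

lemma gint {ε : ℝ} (hε : 0 < ε) (b : ℝ) :
    IntegrableOn (fun t => Real.exp (-ε^2 * t^2) * Real.cos (b*t)) (Ioi 0) := by
  have h8 : Integrable (fun t : ℝ => Real.exp (-ε^2 * t^2)) :=
    integrable_exp_neg_mul_sq (by positivity)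
  refine (h8.integrableOn).mono' ?_ ?_
  · have : Continuous fun t : ℝ => Real.exp (-ε^2 * t^2) * Real.cos (b*t) := by fun_prop
    exact this.aestronglyMeasurable.restrict
  · refine Eventually.of_forall fun t => ?_
    rw [Real.norm_eq_abs, abs_mul, abs_of_pos (Real.exp_pos _)]
    calc Real.exp (-ε^2 * t^2) * |Real.cos (b*t)| ≤ Real.exp (-ε^2 * t^2) * 1 :=
          mul_le_mul_of_nonneg_left (Real.abs_cos_le_one _) (Real.exp_pos _).le
      _ = Real.exp (-ε^2 * t^2) := mul_one _

lemma kint (hp : 1 ≤ p) (c : ℝ) {ε : ℝ} (hε : 0 < ε) :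
    IntegrableOn (fun y => f p y * Real.exp (-(y - c)^2 / (4*ε^2))) (Ioi 0) := by
  have hp0 : 0 < p := lt_of_lt_of_le one_pos hp
  refine (f_int hp).mono' ?_ ?_
  · have hc : Continuous fun y : ℝ => f p y * Real.exp (-(y - c)^2 / (4*ε^2)) :=
      (f_cont hp0).mul (Real.continuous_exp.comp
        ((((continuous_id.sub continuous_const).pow 2).neg).div_const _))
    exact hc.aestronglyMeasurable.restrict
  · refine (ae_restrict_iff' measurableSet_Ioi).mpr (Eventually.of_forall fun y hy => ?_)
    rw [Real.norm_eq_abs, abs_mul, abs_of_pos (Real.exp_pos _),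
      abs_of_pos (show (0:ℝ) < f p y from Real.exp_pos _)]
    have hle : Real.exp (-(y - c)^2 / (4*ε^2)) ≤ 1 := by
      apply Real.exp_le_one_iff.mpr
      have : (0:ℝ) ≤ (y-c)^2 := sq_nonneg _
      have : (0:ℝ) ≤ 4*ε^2 := by positivity
      apply div_nonpos_of_nonpos_of_nonneg <;> nlinarith
    calc f p y * Real.exp (-(y - c)^2 / (4*ε^2)) ≤ f p y * 1 :=
          mul_le_mul_of_nonneg_left hle (Real.exp_pos _).le
      _ = f p y := mul_one _

lemma cos_comb (a b : ℝ) :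
    Real.cos ((a+b)) + Real.cos ((a-b)) = 2 * (Real.cos a * Real.cos b) := by
  rw [Real.cos_add, Real.cos_sub]; ring

lemma Tcalc (s y : ℝ) {ε : ℝ} (hε : 0 < ε) :
    ∫ t in Ioi (0:ℝ), Real.cos (y*t) * w s ε t
      = Real.sqrt π/(2*ε) * (3 * Real.exp (-(y-0)^2/(4*ε^2))
        - 2 * Real.exp (-(y-(-s))^2/(4*ε^2)) - 2 * Real.exp (-(y-s)^2/(4*ε^2))
        + (1/2) * Real.exp (-(y-(-(2*s)))^2/(4*ε^2))
        + (1/2) * Real.exp (-(y-(2*s))^2/(4*ε^2))) := by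
  have hε2 : (0:ℝ) < ε^2 := by positivity
  have hid : ∀ t : ℝ, Real.cos (y*t) * w s ε t
      = 3*(Real.exp (-ε^2 * t^2) * Real.cos (y*t))
        - 2*(Real.exp (-ε^2 * t^2) * Real.cos ((s+y)*t))
        - 2*(Real.exp (-ε^2 * t^2) * Real.cos ((s-y)*t))
        + (1/2)*(Real.exp (-ε^2 * t^2) * Real.cos ((2*s+y)*t))
        + (1/2)*(Real.exp (-ε^2 * t^2) * Real.cos ((2*s-y)*t)) := by
    intro t
    have c1 : Real.cos ((s+y)*t) + Real.cos ((s-y)*t)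
        = 2 * (Real.cos (s*t) * Real.cos (y*t)) := by
      rw [show (s+y)*t = s*t + y*t by ring, show (s-y)*t = s*t - y*t by ring]
      exact cos_comb (s*t) (y*t)
    have c2 : Real.cos ((2*s+y)*t) + Real.cos ((2*s-y)*t)
        = 2 * (Real.cos (2*s*t) * Real.cos (y*t)) := by
      rw [show (2*s+y)*t = 2*s*t + y*t by ring, show (2*s-y)*t = 2*s*t - y*t by ring]
      exact cos_comb (2*s*t) (y*t)
    rw [w]
    linear_combination (2*Real.exp (-ε^2*t^2)) * c1 - (1/2*Real.exp (-ε^2*t^2)) * c2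
  rw [setIntegral_congr_fun measurableSet_Ioi (fun t _ => hid t)]
  have i1 : Integrable (fun t : ℝ => 3*(Real.exp (-ε^2 * t^2) * Real.cos (y*t)))
      (volume.restrict (Ioi 0)) := (gint hε y).const_mul (3:ℝ)
  have i2 : Integrable (fun t : ℝ => 2*(Real.exp (-ε^2 * t^2) * Real.cos ((s+y)*t)))
      (volume.restrict (Ioi 0)) := (gint hε (s+y)).const_mul (2:ℝ)
  have i3 : Integrable (fun t : ℝ => 2*(Real.exp (-ε^2 * t^2) * Real.cos ((s-y)*t)))
      (volume.restrict (Ioi 0)) := (gint hε (s-y)).const_mul (2:ℝ)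
  have i4 : Integrable (fun t : ℝ => (1/2)*(Real.exp (-ε^2 * t^2) * Real.cos ((2*s+y)*t)))
      (volume.restrict (Ioi 0)) := (gint hε (2*s+y)).const_mul ((1:ℝ)/2)
  have i5 : Integrable (fun t : ℝ => (1/2)*(Real.exp (-ε^2 * t^2) * Real.cos ((2*s-y)*t)))
      (volume.restrict (Ioi 0)) := (gint hε (2*s-y)).const_mul ((1:ℝ)/2)
  have j12 : Integrable (fun t : ℝ => 3*(Real.exp (-ε^2 * t^2) * Real.cos (y*t))
      - 2*(Real.exp (-ε^2 * t^2) * Real.cos ((s+y)*t))) (volume.restrict (Ioi 0)) := i1.sub i2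
  have j123 : Integrable (fun t : ℝ => 3*(Real.exp (-ε^2 * t^2) * Real.cos (y*t))
      - 2*(Real.exp (-ε^2 * t^2) * Real.cos ((s+y)*t))
      - 2*(Real.exp (-ε^2 * t^2) * Real.cos ((s-y)*t))) (volume.restrict (Ioi 0)) := j12.sub i3
  have j1234 : Integrable (fun t : ℝ => 3*(Real.exp (-ε^2 * t^2) * Real.cos (y*t))
      - 2*(Real.exp (-ε^2 * t^2) * Real.cos ((s+y)*t))
      - 2*(Real.exp (-ε^2 * t^2) * Real.cos ((s-y)*t))
      + (1/2)*(Real.exp (-ε^2 * t^2) * Real.cos ((2*s+y)*t))) (volume.restrict (Ioi 0)) :=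
    j123.add i4
  rw [integral_add j1234 i5, integral_add j123 i4, integral_sub j12 i3, integral_sub i1 i2,
      integral_const_mul, integral_const_mul, integral_const_mul, integral_const_mul,
      integral_const_mul]
  rw [gauss_cos_Ioi hε2, gauss_cos_Ioi hε2, gauss_cos_Ioi hε2, gauss_cos_Ioi hε2,
      gauss_cos_Ioi hε2]
  have hsq : Real.sqrt (π/ε^2) = Real.sqrt π / ε := by
    rw [Real.sqrt_div pi_pos.le, Real.sqrt_sq hε.le]
  rw [hsq]
  have e0 : -(y:ℝ)^2/(4*ε^2) = -(y-0)^2/(4*ε^2) := by ring_nf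
  have e1 : -((s+y):ℝ)^2/(4*ε^2) = -(y-(-s))^2/(4*ε^2) := by ring_nf
  have e2 : -((s-y):ℝ)^2/(4*ε^2) = -(y-s)^2/(4*ε^2) := by ring_nf
  have e3 : -((2*s+y):ℝ)^2/(4*ε^2) = -(y-(-(2*s)))^2/(4*ε^2) := by ring_nf
  have e4 : -((2*s-y):ℝ)^2/(4*ε^2) = -(y-(2*s))^2/(4*ε^2) := by ring_nf
  rw [e0, e1, e2, e3, e4]
  ring


lemma w_cont (s ε : ℝ) : Continuous (w s ε) := by
  unfold w; fun_prop

lemma A_eq (hp : 1 ≤ p) (s : ℝ) {ε : ℝ} (hε : 0 < ε) :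
    ∫ t in Ioi (0:ℝ), F p t * w s ε t
      = Real.sqrt π * (3 * M p 0 ε - 2 * M p (-s) ε - 2 * M p s ε
          + (1/2) * M p (-(2*s)) ε + (1/2) * M p (2*s) ε) := by
  have hp0 : 0 < p := lt_of_lt_of_le one_pos hp
  have hε2 : (0:ℝ) < ε^2 := by positivity
  set μ := (volume : Measure ℝ).restrict (Ioi 0) with hμ
  -- the two-variable integrand
  set φ : ℝ → ℝ → ℝ := fun t y => f p y * Real.cos (t*y) * w s ε t with hφ
  have hI : Integrable (Function.uncurry φ) (μ.prod μ) := by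
    have hbound : Integrable (fun z : ℝ × ℝ => (8 * Real.exp (-ε^2 * z.1^2)) * f p z.2)
        (μ.prod μ) := by
      have h1 : Integrable (fun t : ℝ => 8 * Real.exp (-ε^2 * t^2)) μ :=
        ((integrable_exp_neg_mul_sq hε2).const_mul 8).integrableOn
      exact h1.mul_prod (f_int hp)
    refine hbound.mono' ?_ ?_
    · have hc : Continuous (Function.uncurry φ) := by
        rw [hφ]
        refine Continuous.mul (Continuous.mul ?_ ?_) ?_
        · exact (f_cont hp0).comp continuous_snd
        · exact Real.continuous_cos.comp (continuous_fst.mul continuous_snd)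
        · exact (w_cont s ε).comp continuous_fst
      exact hc.aestronglyMeasurable
    · refine Eventually.of_forall fun z => ?_
      rw [hφ]
      have h1 : 0 < f p z.2 := Real.exp_pos _
      have h2 : |Real.cos (z.1 * z.2)| ≤ 1 := Real.abs_cos_le_one _
      have h3 := w_abs_le s ε z.1
      have h4 := abs_nonneg (Real.cos (z.1 * z.2))
      have h5 := Real.exp_pos (-ε^2 * z.1^2)
      simp only [Function.uncurry, Real.norm_eq_abs]
      rw [abs_mul, abs_mul, abs_of_pos h1]
      calc f p z.2 * |Real.cos (z.1 * z.2)| * |w s ε z.1|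
          ≤ f p z.2 * 1 * (8 * Real.exp (-ε^2 * z.1^2)) := by
            apply mul_le_mul
            · exact mul_le_mul_of_nonneg_left h2 h1.le
            · exact h3
            · exact abs_nonneg _
            · positivity
        _ = 8 * Real.exp (-ε^2 * z.1^2) * f p z.2 := by ring
  have step1 : ∫ t in Ioi (0:ℝ), F p t * w s ε t = ∫ t in Ioi (0:ℝ), ∫ y in Ioi (0:ℝ), φ t y := by
    refine setIntegral_congr_fun measurableSet_Ioi fun t _ => ?_
    rw [F, hφ]
    exact (integral_mul_const _ _).symm
  have step2 : ∫ t in Ioi (0:ℝ), ∫ y in Ioi (0:ℝ), φ t y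
      = ∫ y in Ioi (0:ℝ), ∫ t in Ioi (0:ℝ), φ t y := integral_integral_swap hI
  have step3 : ∀ y : ℝ, ∫ t in Ioi (0:ℝ), φ t y
      = f p y * (Real.sqrt π/(2*ε) * (3 * Real.exp (-(y-0)^2/(4*ε^2))
        - 2 * Real.exp (-(y-(-s))^2/(4*ε^2)) - 2 * Real.exp (-(y-s)^2/(4*ε^2))
        + (1/2) * Real.exp (-(y-(-(2*s)))^2/(4*ε^2))
        + (1/2) * Real.exp (-(y-(2*s))^2/(4*ε^2)))) := by
    intro y
    have h1 : ∀ t : ℝ, φ t y = f p y * (Real.cos (y*t) * w s ε t) := by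
      intro t
      rw [hφ]
      simp only []
      rw [mul_comm t y, mul_assoc]
    rw [show (fun t => φ t y) = fun t => f p y * (Real.cos (y*t) * w s ε t) from funext h1]
    rw [integral_const_mul, Tcalc s y hε]
  rw [step1, step2]
  rw [show (fun y => ∫ t in Ioi (0:ℝ), φ t y) = _ from funext step3]
  -- now pull constants and split
  have k0 : Integrable (fun y : ℝ => 3 * (f p y * Real.exp (-(y-0)^2/(4*ε^2)))) μ :=
    (kint hp 0 hε).const_mul 3
  have k1 : Integrable (fun y : ℝ => 2 * (f p y * Real.exp (-(y-(-s))^2/(4*ε^2)))) μ :=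
    (kint hp (-s) hε).const_mul 2
  have k2 : Integrable (fun y : ℝ => 2 * (f p y * Real.exp (-(y-s)^2/(4*ε^2)))) μ :=
    (kint hp s hε).const_mul 2
  have k3 : Integrable (fun y : ℝ => (1/2) * (f p y * Real.exp (-(y-(-(2*s)))^2/(4*ε^2)))) μ :=
    (kint hp (-(2*s)) hε).const_mul (1/2)
  have k4 : Integrable (fun y : ℝ => (1/2) * (f p y * Real.exp (-(y-(2*s))^2/(4*ε^2)))) μ :=
    (kint hp (2*s) hε).const_mul (1/2)
  have m12 : Integrable (fun y : ℝ => 3 * (f p y * Real.exp (-(y-0)^2/(4*ε^2)))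
      - 2 * (f p y * Real.exp (-(y-(-s))^2/(4*ε^2)))) μ := k0.sub k1
  have m123 : Integrable (fun y : ℝ => 3 * (f p y * Real.exp (-(y-0)^2/(4*ε^2)))
      - 2 * (f p y * Real.exp (-(y-(-s))^2/(4*ε^2)))
      - 2 * (f p y * Real.exp (-(y-s)^2/(4*ε^2)))) μ := m12.sub k2
  have m1234 : Integrable (fun y : ℝ => 3 * (f p y * Real.exp (-(y-0)^2/(4*ε^2)))
      - 2 * (f p y * Real.exp (-(y-(-s))^2/(4*ε^2)))
      - 2 * (f p y * Real.exp (-(y-s)^2/(4*ε^2)))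
      + (1/2) * (f p y * Real.exp (-(y-(-(2*s)))^2/(4*ε^2)))) μ := m123.add k3
  have hpull : (∫ y in Ioi (0:ℝ), f p y * (Real.sqrt π/(2*ε) * (3 * Real.exp (-(y-0)^2/(4*ε^2))
        - 2 * Real.exp (-(y-(-s))^2/(4*ε^2)) - 2 * Real.exp (-(y-s)^2/(4*ε^2))
        + (1/2) * Real.exp (-(y-(-(2*s)))^2/(4*ε^2))
        + (1/2) * Real.exp (-(y-(2*s))^2/(4*ε^2)))))
      = Real.sqrt π/(2*ε) * ∫ y in Ioi (0:ℝ), (3 * (f p y * Real.exp (-(y-0)^2/(4*ε^2)))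
        - 2 * (f p y * Real.exp (-(y-(-s))^2/(4*ε^2)))
        - 2 * (f p y * Real.exp (-(y-s)^2/(4*ε^2)))
        + (1/2) * (f p y * Real.exp (-(y-(-(2*s)))^2/(4*ε^2)))
        + (1/2) * (f p y * Real.exp (-(y-(2*s))^2/(4*ε^2)))) := by
    rw [← integral_const_mul]
    exact setIntegral_congr_fun measurableSet_Ioi fun y _ => by ring
  rw [hpull, integral_add m1234 k4, integral_add m123 k3, integral_sub m12 k2,
    integral_sub k0 k1, integral_const_mul, integral_const_mul, integral_const_mul,
    integral_const_mul, integral_const_mul]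
  have hK : ∀ c : ℝ, (∫ y in Ioi (0:ℝ), f p y * Real.exp (-(y-c)^2/(4*ε^2))) = K p c ε := by
    intro c; rw [K]
  rw [hK 0, hK (-s), hK s, hK (-(2*s)), hK (2*s)]
  rw [M, M, M, M, M]
  field_simp



theorem main_exists (p : ℝ) (hp2 : 2 < p) : ∃ t : ℝ, 0 < t ∧ F p t = 0 := by
  have hp1 : 1 ≤ p := by linarith
  have hp0 : 0 < p := by linarith
  by_contra hcon
  push_neg at hcon
  have hF0 : 0 < F p 0 := F_zero_pos hp1
  have hFpos : ∀ t, 0 ≤ t → 0 ≤ F p t := by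
    intro t ht
    rcases eq_or_lt_of_le ht with h | h
    · rw [← h]; exact hF0.le
    by_contra hneg
    push_neg at hneg
    have hcont : ContinuousOn (F p) (Icc 0 t) := (F_cont hp1).continuousOn
    have h0mem : (0:ℝ) ∈ Icc (F p t) (F p 0) := ⟨hneg.le, hF0.le⟩
    obtain ⟨c, hc, hc0⟩ := intermediate_value_Icc' h.le hcont h0mem
    have hcpos : 0 < c := by
      rcases eq_or_lt_of_le hc.1 with h1 | h1
      · exfalso; rw [← h1] at hc0; linarith
      · exact h1
    exact hcon c hcpos hc0
  obtain ⟨s, hs0, hs⟩ := exists_s hp2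
  have hππ : Real.sqrt π * Real.sqrt π = π := Real.mul_self_sqrt pi_pos.le
  -- the limit of the combination
  have t0 := tendsto_M_zero (p := p) hp1
  have t1 := tendsto_M_neg (p := p) hp1 (show -s < 0 by linarith)
  have t2 := tendsto_M_pos (p := p) hp1 hs0
  have t3 := tendsto_M_neg (p := p) hp1 (show -(2*s) < 0 by linarith)
  have t4 := tendsto_M_pos (p := p) hp1 (show (0:ℝ) < 2*s by linarith)
  have combined : Tendsto (fun ε => Real.sqrt π * (3 * M p 0 ε - 2 * M p (-s) ε - 2 * M p s ε
      + (1/2) * M p (-(2*s)) ε + (1/2) * M p (2*s) ε)) (nhdsWithin 0 (Ioi 0))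
      (nhds (Real.sqrt π * (3 * (Real.sqrt π / 2) - 2 * 0 - 2 * (Real.sqrt π * f p s)
        + (1/2) * 0 + (1/2) * (Real.sqrt π * f p (2*s))))) := by
    exact (((((t0.const_mul 3).sub (t1.const_mul 2)).sub (t2.const_mul 2)).add
      (t3.const_mul (1/2))).add (t4.const_mul (1/2))).const_mul (Real.sqrt π)
  have hlim_eq : Real.sqrt π * (3 * (Real.sqrt π / 2) - 2 * 0 - 2 * (Real.sqrt π * f p s)
      + (1/2) * 0 + (1/2) * (Real.sqrt π * f p (2*s)))
      = π / 2 * (3 - 4 * f p s + f p (2*s)) := by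
    linear_combination (3/2 - 2 * f p s + (1/2) * f p (2*s)) * hππ
  rw [hlim_eq] at combined
  have hev : ∀ᶠ ε in nhdsWithin (0:ℝ) (Ioi 0),
      0 ≤ Real.sqrt π * (3 * M p 0 ε - 2 * M p (-s) ε - 2 * M p s ε
        + (1/2) * M p (-(2*s)) ε + (1/2) * M p (2*s) ε) := by
    filter_upwards [self_mem_nhdsWithin] with ε hε
    have hε' : 0 < ε := mem_Ioi.mp hε
    rw [← A_eq hp1 s hε']
    refine setIntegral_nonneg measurableSet_Ioi fun t ht => ?_
    exact mul_nonneg (hFpos t (le_of_lt ht)) (w_nonneg s ε t)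
  have hge : 0 ≤ π / 2 * (3 - 4 * f p s + f p (2*s)) := ge_of_tendsto combined hev
  nlinarith [pi_pos]

end Stmt13Aux

/-- For `β > 1`, there exists `t > 0` with
`Re G_{β,0}(it) = ∫₀^∞ exp(−y^{β+1}/(β+1)) cos(ty) dy = 0`. -/
theorem stmt13 (β : ℝ) (hβ : 1 < β) :
    ∃ t : ℝ, 0 < t ∧
      (G β 0 (Complex.I * (t : ℂ))).re = 0 ∧
      (G β 0 (Complex.I * (t : ℂ))).re
        = ∫ y in Set.Ioi (0 : ℝ),
            Real.exp (-y ^ (β + 1) / (β + 1)) * Real.cos (t * y) := by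
  have hβ0 : 0 < β := by linarith
  obtain ⟨t, ht, hFt⟩ := Stmt13Aux.main_exists (β + 1) (by linarith)
  have hre : (G β 0 (Complex.I * (t : ℂ))).re = Stmt13Aux.F (β + 1) t :=
    Stmt13Aux.G_re β hβ0 t
  have hint : Stmt13Aux.F (β + 1) t
      = ∫ y in Set.Ioi (0 : ℝ), Real.exp (-y ^ (β + 1) / (β + 1)) * Real.cos (t * y) := rfl
  exact ⟨t, ht, by rw [hre, hFt], by rw [hre, hint]⟩
end
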